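/- Let V be a U_q^∨-module that is a finite-dimensional 𝔽-vector space of positive dimension, and let T denote the action of y⁻¹ on V. Let V_inv = ∩_{n≥0} image(Tⁿ) and V_nil = ∪_{n≥0} kernel(Tⁿ). Then V_inv and V_nil are U_q^∨-submodules of V and V = V_inv ⊕ V_nil. In particular, if the U_q^∨-module V is indecomposable, then T is either nilpotent or invertible on V. -/
import Mathlib


namespace Paper


/-- Generators for the equitable presentation of `U_q(sl2)`: `x`, `y`, `y⁻¹`, `z`. -/
inductive EqGen : Type
  | x | y | y' | z

/-- The defining relations of the equitable presentation of `U_q(sl2)`. -/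
inductive EqRel (F : Type*) [Field F] (q : F) :
    FreeAlgebra F EqGen → FreeAlgebra F EqGen → Prop
  | yy' : EqRel F q (FreeAlgebra.ι F EqGen.y * FreeAlgebra.ι F EqGen.y') 1
  | y'y : EqRel F q (FreeAlgebra.ι F EqGen.y' * FreeAlgebra.ι F EqGen.y) 1
  | xy : EqRel F q
      (q • (FreeAlgebra.ι F EqGen.x * FreeAlgebra.ι F EqGen.y)
        - q⁻¹ • (FreeAlgebra.ι F EqGen.y * FreeAlgebra.ι F EqGen.x))
      ((q - q⁻¹) • (1 : FreeAlgebra F EqGen))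
  | yz : EqRel F q
      (q • (FreeAlgebra.ι F EqGen.y * FreeAlgebra.ι F EqGen.z)
        - q⁻¹ • (FreeAlgebra.ι F EqGen.z * FreeAlgebra.ι F EqGen.y))
      ((q - q⁻¹) • (1 : FreeAlgebra F EqGen))
  | zx : EqRel F q
      (q • (FreeAlgebra.ι F EqGen.z * FreeAlgebra.ι F EqGen.x)
        - q⁻¹ • (FreeAlgebra.ι F EqGen.x * FreeAlgebra.ι F EqGen.z))
      ((q - q⁻¹) • (1 : FreeAlgebra F EqGen))

/-- `U_q(sl2)` in its equitable presentation. -/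
abbrev Usl2 (F : Type*) [Field F] (q : F) := RingQuot (EqRel F q)

noncomputable def ux (F : Type*) [Field F] (q : F) : Usl2 F q :=
  RingQuot.mkAlgHom F (EqRel F q) (FreeAlgebra.ι F EqGen.x)

noncomputable def uy (F : Type*) [Field F] (q : F) : Usl2 F q :=
  RingQuot.mkAlgHom F (EqRel F q) (FreeAlgebra.ι F EqGen.y)

noncomputable def uy' (F : Type*) [Field F] (q : F) : Usl2 F q :=
  RingQuot.mkAlgHom F (EqRel F q) (FreeAlgebra.ι F EqGen.y')

noncomputable def uz (F : Type*) [Field F] (q : F) : Usl2 F q :=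
  RingQuot.mkAlgHom F (EqRel F q) (FreeAlgebra.ι F EqGen.z)

/-- `X = a⁻²x + (1 − a⁻²)y⁻¹`. -/
noncomputable def uX (F : Type*) [Field F] (q a : F) : Usl2 F q :=
  (a ^ 2)⁻¹ • ux F q + (1 - (a ^ 2)⁻¹) • uy' F q

/-- `Z = a²z + (1 − a²)y⁻¹`. -/
noncomputable def uZ (F : Type*) [Field F] (q a : F) : Usl2 F q :=
  a ^ 2 • uz F q + (1 - a ^ 2) • uy' F q

/-- `A = a⁻¹x + az`. -/
noncomputable def uA (F : Type*) [Field F] (q a : F) : Usl2 F q :=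
  a⁻¹ • ux F q + a • uz F q

/-- `U_q^∨`, the subalgebra of `U_q(sl2)` generated by `x`, `y⁻¹`, `z`. -/
noncomputable def Uvee (F : Type*) [Field F] (q : F) : Subalgebra F (Usl2 F q) :=
  Algebra.adjoin F {ux F q, uy' F q, uz F q}


lemma uy'_mem (F : Type*) [Field F] (q : F) : uy' F q ∈ Uvee F q :=
  Algebra.subset_adjoin (by simp)


section Aux

variable {F : Type*} [Field F] {q : F}

lemma rel_yy' : uy F q * uy' F q = 1 := by
  simpa [uy, uy', map_mul] using
    RingQuot.mkAlgHom_rel F (EqRel.yy' (F := F) (q := q))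

lemma rel_y'y : uy' F q * uy F q = 1 := by
  simpa [uy, uy', map_mul] using
    RingQuot.mkAlgHom_rel F (EqRel.y'y (F := F) (q := q))

lemma rel_xy : q • (ux F q * uy F q) - q⁻¹ • (uy F q * ux F q)
    = (q - q⁻¹) • (1 : Usl2 F q) := by
  simpa [ux, uy, map_mul, map_sub, map_smul] using
    RingQuot.mkAlgHom_rel F (EqRel.xy (F := F) (q := q))

lemma rel_yz : q • (uy F q * uz F q) - q⁻¹ • (uz F q * uy F q)
    = (q - q⁻¹) • (1 : Usl2 F q) := by
  simpa [uy, uz, map_mul, map_sub, map_smul] using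
    RingQuot.mkAlgHom_rel F (EqRel.yz (F := F) (q := q))

lemma rel1 : q • (uy' F q * ux F q) - q⁻¹ • (ux F q * uy' F q)
    = (q - q⁻¹) • (uy' F q * uy' F q) := by
  have h := congrArg (fun w => uy' F q * w * uy' F q) (rel_xy (F := F) (q := q))
  simp only [mul_sub, sub_mul, mul_smul_comm, smul_mul_assoc, mul_one] at h
  rw [show uy' F q * (ux F q * uy F q) * uy' F q = uy' F q * ux F q by
        rw [mul_assoc, mul_assoc, rel_yy', mul_one],
      show uy' F q * (uy F q * ux F q) * uy' F q = ux F q * uy' F q by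
        rw [← mul_assoc, rel_y'y, one_mul]] at h
  exact h

lemma rel2 : q • (uz F q * uy' F q) - q⁻¹ • (uy' F q * uz F q)
    = (q - q⁻¹) • (uy' F q * uy' F q) := by
  have h := congrArg (fun w => uy' F q * w * uy' F q) (rel_yz (F := F) (q := q))
  simp only [mul_sub, sub_mul, mul_smul_comm, smul_mul_assoc, mul_one] at h
  rw [show uy' F q * (uy F q * uz F q) * uy' F q = uz F q * uy' F q by
        rw [← mul_assoc, rel_y'y, one_mul],
      show uy' F q * (uz F q * uy F q) * uy' F q = uy' F q * uz F q by
        rw [mul_assoc, mul_assoc, rel_yy', mul_one]] at h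
  exact h

end Aux

lemma ux_mem (F : Type*) [Field F] (q : F) : ux F q ∈ Uvee F q :=
  Algebra.subset_adjoin (by simp)

lemma uz_mem (F : Type*) [Field F] (q : F) : uz F q ∈ Uvee F q :=
  Algebra.subset_adjoin (by simp)

/-- **Lemma 11.15 and Corollary 11.16.** Let `V` be a finite-dimensional
`U_q^∨`-module of positive dimension (given by `ρ : U_q^∨ → End(V)`), and let `T`
be the action of `y⁻¹` on `V`.  Set `V_inv = ⋂ₙ im(Tⁿ)` and `V_nil = ⋃ₙ ker(Tⁿ)`.
Then `V_inv` and `V_nil` are `U_q^∨`-submodules of `V`, and `V = V_inv ⊕ V_nil`.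
In particular, if the `U_q^∨`-module `V` is indecomposable then `T` is either
nilpotent or invertible. -/
theorem statement19 (F : Type*) [Field F] (q : F) (hq0 : q ≠ 0) (hq4 : q ^ 4 ≠ 1)
    (V : Type*) [AddCommGroup V] [Module F V] [FiniteDimensional F V]
    (hV : 0 < Module.finrank F V)
    (ρ : Uvee F q →ₐ[F] Module.End F V)
    (T : Module.End F V) (hT : T = ρ ⟨uy' F q, uy'_mem F q⟩)
    (Vinv Vnil : Submodule F V)
    (hVinv : Vinv = ⨅ n : ℕ, LinearMap.range (T ^ n))
    (hVnil : Vnil = ⨆ n : ℕ, LinearMap.ker (T ^ n)) :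
    (∀ u : Uvee F q, ∀ v ∈ Vinv, ρ u v ∈ Vinv) ∧
    (∀ u : Uvee F q, ∀ v ∈ Vnil, ρ u v ∈ Vnil) ∧
    IsCompl Vinv Vnil ∧
    ((¬ ∃ W₁ W₂ : Submodule F V,
        (∀ u : Uvee F q, ∀ v ∈ W₁, ρ u v ∈ W₁) ∧
        (∀ u : Uvee F q, ∀ v ∈ W₂, ρ u v ∈ W₂) ∧
        W₁ ≠ ⊥ ∧ W₂ ≠ ⊥ ∧ IsCompl W₁ W₂) →
      IsNilpotent T ∨ IsUnit T) := by
  subst hT hVinv hVnil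
  set Y : Module.End F V := ρ ⟨uy' F q, uy'_mem F q⟩ with hY
  set X : Module.End F V := ρ ⟨ux F q, ux_mem F q⟩ with hX
  set Z : Module.End F V := ρ ⟨uz F q, uz_mem F q⟩ with hZ
  -- relations in the endomorphism algebra
  have hE1 : q • (Y * X) - q⁻¹ • (X * Y) = (q - q⁻¹) • (Y * Y) := by
    have h : ρ (q • ((⟨uy' F q, uy'_mem F q⟩ : Uvee F q) * ⟨ux F q, ux_mem F q⟩)
          - q⁻¹ • ((⟨ux F q, ux_mem F q⟩ : Uvee F q) * ⟨uy' F q, uy'_mem F q⟩))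
        = ρ ((q - q⁻¹) • ((⟨uy' F q, uy'_mem F q⟩ : Uvee F q) * ⟨uy' F q, uy'_mem F q⟩)) :=
      congrArg ρ (Subtype.ext rel1)
    simp only [map_sub ρ, map_smul ρ, map_mul ρ] at h
    exact h
  have hE2 : q • (Z * Y) - q⁻¹ • (Y * Z) = (q - q⁻¹) • (Y * Y) := by
    have h : ρ (q • ((⟨uz F q, uz_mem F q⟩ : Uvee F q) * ⟨uy' F q, uy'_mem F q⟩)
          - q⁻¹ • ((⟨uy' F q, uy'_mem F q⟩ : Uvee F q) * ⟨uz F q, uz_mem F q⟩))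
        = ρ ((q - q⁻¹) • ((⟨uy' F q, uy'_mem F q⟩ : Uvee F q) * ⟨uy' F q, uy'_mem F q⟩)) :=
      congrArg ρ (Subtype.ext rel2)
    simp only [map_sub ρ, map_smul ρ, map_mul ρ] at h
    exact h
  -- commutation consequences
  have hc1 : X * Y = Y * ((q * q) • X - (q * q - 1) • Y) := by
    have h := congrArg (fun w => q • w) hE1
    simp only [smul_sub, smul_smul, mul_inv_cancel₀ hq0, one_smul] at h
    rw [mul_sub q q q⁻¹, mul_inv_cancel₀ hq0] at h
    rw [mul_sub, mul_smul_comm, mul_smul_comm, ← h]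
    abel
  have hc2 : Y * X = ((q⁻¹ * q⁻¹) • X + (1 - q⁻¹ * q⁻¹) • Y) * Y := by
    have h := congrArg (fun w => q⁻¹ • w) hE1
    simp only [smul_sub, smul_smul, inv_mul_cancel₀ hq0, one_smul] at h
    rw [mul_sub q⁻¹ q q⁻¹, inv_mul_cancel₀ hq0] at h
    rw [add_mul, smul_mul_assoc, smul_mul_assoc, ← h]
    abel
  have hc3 : Z * Y = Y * ((q⁻¹ * q⁻¹) • Z + (1 - q⁻¹ * q⁻¹) • Y) := by
    have h := congrArg (fun w => q⁻¹ • w) hE2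
    simp only [smul_sub, smul_smul, inv_mul_cancel₀ hq0, one_smul] at h
    rw [mul_sub q⁻¹ q q⁻¹, inv_mul_cancel₀ hq0] at h
    rw [mul_add, mul_smul_comm, mul_smul_comm, ← h]
    abel
  have hc4 : Y * Z = ((q * q) • Z - (q * q - 1) • Y) * Y := by
    have h := congrArg (fun w => q • w) hE2
    simp only [smul_sub, smul_smul, mul_inv_cancel₀ hq0, one_smul] at h
    rw [mul_sub q q q⁻¹, mul_inv_cancel₀ hq0] at h
    rw [sub_mul, smul_mul_assoc, smul_mul_assoc, ← h]
    abel
  -- the subalgebra generated by the images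
  have hXS : X ∈ Algebra.adjoin F ({X, Y, Z} : Set (Module.End F V)) :=
    Algebra.subset_adjoin (by simp)
  have hYS : Y ∈ Algebra.adjoin F ({X, Y, Z} : Set (Module.End F V)) :=
    Algebra.subset_adjoin (by simp)
  have hZS : Z ∈ Algebra.adjoin F ({X, Y, Z} : Set (Module.End F V)) :=
    Algebra.subset_adjoin (by simp)
  have left : ∀ s ∈ Algebra.adjoin F ({X, Y, Z} : Set (Module.End F V)),
      ∃ c ∈ Algebra.adjoin F ({X, Y, Z} : Set (Module.End F V)), s * Y = Y * c := by
    intro s hs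
    induction hs using Algebra.adjoin_induction with
    | mem w hw =>
      rcases hw with rfl | rfl | rfl
      · exact ⟨_, sub_mem (Subalgebra.smul_mem _ hXS _) (Subalgebra.smul_mem _ hYS _), hc1⟩
      · exact ⟨Y, hYS, rfl⟩
      · exact ⟨_, add_mem (Subalgebra.smul_mem _ hZS _) (Subalgebra.smul_mem _ hYS _), hc3⟩
    | algebraMap r =>
      exact ⟨algebraMap F _ r, Subalgebra.algebraMap_mem _ r, (Algebra.commutes r Y)⟩
    | add w₁ w₂ h₁ h₂ ih₁ ih₂ =>
      obtain ⟨c₁, hc₁S, e₁⟩ := ih₁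
      obtain ⟨c₂, hc₂S, e₂⟩ := ih₂
      exact ⟨c₁ + c₂, add_mem hc₁S hc₂S, by rw [add_mul, mul_add, e₁, e₂]⟩
    | mul w₁ w₂ h₁ h₂ ih₁ ih₂ =>
      obtain ⟨c₁, hc₁S, e₁⟩ := ih₁
      obtain ⟨c₂, hc₂S, e₂⟩ := ih₂
      exact ⟨c₁ * c₂, mul_mem hc₁S hc₂S, by
        rw [mul_assoc, e₂, ← mul_assoc, e₁, mul_assoc]⟩
  have right : ∀ s ∈ Algebra.adjoin F ({X, Y, Z} : Set (Module.End F V)),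
      ∃ c ∈ Algebra.adjoin F ({X, Y, Z} : Set (Module.End F V)), Y * s = c * Y := by
    intro s hs
    induction hs using Algebra.adjoin_induction with
    | mem w hw =>
      rcases hw with rfl | rfl | rfl
      · exact ⟨_, add_mem (Subalgebra.smul_mem _ hXS _) (Subalgebra.smul_mem _ hYS _), hc2⟩
      · exact ⟨Y, hYS, rfl⟩
      · exact ⟨_, sub_mem (Subalgebra.smul_mem _ hZS _) (Subalgebra.smul_mem _ hYS _), hc4⟩
    | algebraMap r =>
      exact ⟨algebraMap F _ r, Subalgebra.algebraMap_mem _ r, (Algebra.commutes r Y).symm⟩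
    | add w₁ w₂ h₁ h₂ ih₁ ih₂ =>
      obtain ⟨c₁, hc₁S, e₁⟩ := ih₁
      obtain ⟨c₂, hc₂S, e₂⟩ := ih₂
      exact ⟨c₁ + c₂, add_mem hc₁S hc₂S, by rw [mul_add, add_mul, e₁, e₂]⟩
    | mul w₁ w₂ h₁ h₂ ih₁ ih₂ =>
      obtain ⟨c₁, hc₁S, e₁⟩ := ih₁
      obtain ⟨c₂, hc₂S, e₂⟩ := ih₂
      exact ⟨c₁ * c₂, mul_mem hc₁S hc₂S, by
        rw [← mul_assoc, e₁, mul_assoc, e₂, ← mul_assoc]⟩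
  have leftPow : ∀ s ∈ Algebra.adjoin F ({X, Y, Z} : Set (Module.End F V)),
      ∀ n : ℕ, ∃ c, s * Y ^ n = Y ^ n * c := by
    intro s hs n
    induction n generalizing s with
    | zero => exact ⟨s, by simp⟩
    | succ n ih =>
      obtain ⟨c, hcS, hc⟩ := left s hs
      obtain ⟨d, hd⟩ := ih c hcS
      exact ⟨d, by rw [pow_succ', ← mul_assoc, hc, mul_assoc, hd, ← mul_assoc]⟩
  have rightPow : ∀ s ∈ Algebra.adjoin F ({X, Y, Z} : Set (Module.End F V)),
      ∀ n : ℕ, ∃ c, Y ^ n * s = c * Y ^ n := by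
    intro s hs n
    induction n generalizing s with
    | zero => exact ⟨s, by simp⟩
    | succ n ih =>
      obtain ⟨c, hcS, hc⟩ := right s hs
      obtain ⟨d, hd⟩ := ih c hcS
      exact ⟨d, by rw [pow_succ, mul_assoc, hc, ← mul_assoc, hd, mul_assoc]⟩
  -- the image of ρ lands in the adjoined subalgebra
  have hρS : ∀ u : Uvee F q, ρ u ∈ Algebra.adjoin F ({X, Y, Z} : Set (Module.End F V)) := by
    intro u
    obtain ⟨w, hw⟩ := u
    induction hw using Algebra.adjoin_induction with
    | mem w hw =>
      rcases hw with rfl | rfl | rfl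
      · exact hXS
      · exact hYS
      · exact hZS
    | algebraMap r =>
      show ρ (algebraMap F (Uvee F q) r) ∈ _
      rw [AlgHom.commutes]
      exact Subalgebra.algebraMap_mem _ r
    | add w₁ w₂ h₁ h₂ ih₁ ih₂ =>
      show ρ ((⟨w₁, h₁⟩ : Uvee F q) + ⟨w₂, h₂⟩) ∈ _
      rw [map_add]
      exact add_mem ih₁ ih₂
    | mul w₁ w₂ h₁ h₂ ih₁ ih₂ =>
      show ρ ((⟨w₁, h₁⟩ : Uvee F q) * ⟨w₂, h₂⟩) ∈ _
      rw [map_mul]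
      exact mul_mem ih₁ ih₂
  -- invariance of Vinv
  have hinv : ∀ u : Uvee F q, ∀ v ∈ (⨅ n : ℕ, LinearMap.range (Y ^ n)),
      ρ u v ∈ (⨅ n : ℕ, LinearMap.range (Y ^ n)) := by
    intro u v hv
    rw [Submodule.mem_iInf] at hv ⊢
    intro n
    obtain ⟨w, hw⟩ := hv n
    obtain ⟨c, hc⟩ := leftPow (ρ u) (hρS u) n
    exact ⟨c w, by rw [← hw, ← Module.End.mul_apply, ← hc, Module.End.mul_apply]⟩
  -- kernels form a monotone chain
  have kerMono : Monotone fun n : ℕ => LinearMap.ker (Y ^ n) := by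
    intro m n hmn v hv
    simp only [LinearMap.mem_ker] at hv ⊢
    obtain ⟨k, rfl⟩ := Nat.exists_eq_add_of_le hmn
    rw [add_comm m k, pow_add, Module.End.mul_apply, hv, map_zero]
  have hnil : ∀ u : Uvee F q, ∀ v ∈ (⨆ n : ℕ, LinearMap.ker (Y ^ n)),
      ρ u v ∈ (⨆ n : ℕ, LinearMap.ker (Y ^ n)) := by
    intro u v hv
    rw [Submodule.mem_iSup_of_directed _ kerMono.directed_le] at hv ⊢
    obtain ⟨n, hn⟩ := hv
    refine ⟨n, ?_⟩
    obtain ⟨c, hc⟩ := rightPow (ρ u) (hρS u) n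
    simp only [LinearMap.mem_ker] at hn ⊢
    rw [← Module.End.mul_apply, hc, Module.End.mul_apply, hn, map_zero]
  have hcompl : IsCompl (⨅ n : ℕ, LinearMap.range (Y ^ n)) (⨆ n : ℕ, LinearMap.ker (Y ^ n)) :=
    (LinearMap.isCompl_iSup_ker_pow_iInf_range_pow Y).symm
  refine ⟨hinv, hnil, hcompl, ?_⟩
  intro hnd
  by_cases hb : (⨆ n : ℕ, LinearMap.ker (Y ^ n)) = ⊥
  · right
    rw [LinearMap.isUnit_iff_ker_eq_bot]
    have h1 : LinearMap.ker Y ≤ ⨆ n : ℕ, LinearMap.ker (Y ^ n) :=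
      le_iSup_of_le 1 (by rw [pow_one])
    rw [hb, le_bot_iff] at h1
    exact h1
  · by_cases ha : (⨅ n : ℕ, LinearMap.range (Y ^ n)) = ⊥
    · left
      have htop : (⨆ n : ℕ, LinearMap.ker (Y ^ n)) = ⊤ := by
        have h2 := hcompl.sup_eq_top
        rwa [ha, bot_sup_eq] at h2
      obtain ⟨n, hn⟩ := Filter.eventually_atTop.mp Y.eventually_iSup_ker_pow_eq
      refine ⟨n, ?_⟩
      have h3 : LinearMap.ker (Y ^ n) = ⊤ := by
        have := hn n le_rfl
        rw [this] at htop
        exact htop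
      exact LinearMap.ker_eq_top.mp h3
    · exact absurd ⟨_, _, hinv, hnil, ha, hb, hcompl⟩ hnd

end Paper
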